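/- For every n ∈ {2,3,…} ∪ {ω}, the class of all finite n-partite tournaments has EPPA: every finite n-partite tournament A admits a finite n-partite tournament B containing A as an induced substructure such that every isomorphism between induced substructures of A extends to an automorphism of B. -/

import Mathlib

/-- An ω-partite tournament on vertex set `V`: a directed graph (irreflexive,
antisymmetric) in which non-adjacency is an equivalence relation; its classes are the
parts. -/
structure PartiteTournament (V : Type*) where
  E : V → V → Prop
  asymm : ∀ u v, E u v → ¬ E v u
  nonadj_equiv : Equivalence (fun u v => ¬ E u v ∧ ¬ E v u)

/-- The setoid of non-adjacency, whose classes are the parts. -/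
def nonadjSetoid {V : Type*} (T : PartiteTournament V) : Setoid V :=
  ⟨fun u v => ¬ T.E u v ∧ ¬ T.E v u, T.nonadj_equiv⟩

namespace EPPA18

lemma xor_eq_of_false : ∀ x y u v : Bool, (u ^^ v) = false →
    ((x ^^ u) = (y ^^ v) ↔ x = y) := by decide

lemma xor_eq_of_true : ∀ x y u v : Bool, (u ^^ v) = true →
    ((x ^^ u) = (y ^^ v) ↔ ¬ x = y) := by decide

lemma exists_perm_extend {X : Type*} [Finite X] {s : Set X} (f : s → X)
    (hf : Function.Injective f) : ∃ σ : Equiv.Perm X, ∀ x : s, σ x = f x := by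
  classical
  cases nonempty_fintype X
  have hcard : Fintype.card ↥(sᶜ) = Fintype.card ↥((Set.range f)ᶜ) := by
    rw [Fintype.card_compl_set, Fintype.card_compl_set,
      Fintype.card_congr (Equiv.ofInjective f hf)]
  obtain ⟨e2⟩ := Fintype.card_eq.mp hcard
  refine ⟨(Equiv.Set.sumCompl s).symm.trans (((Equiv.ofInjective f hf).sumCongr e2).trans
    (Equiv.Set.sumCompl (Set.range f))), fun x => ?_⟩
  have h1 : (Equiv.Set.sumCompl s).symm (x : X) = Sum.inl x := Equiv.Set.sumCompl_symm_apply x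
  simp [h1]

noncomputable section

/-- an injection into ℕ, for tie-breaking -/
def natEmb (X : Type*) [Countable X] : X ↪ ℕ := (nonempty_embedding_nat X).some

variable {A : Type} [Finite A] (T : PartiteTournament A)

abbrev Q := Quotient (nonadjSetoid T)

/-- The enlarged vertex set: parts × A, each part a copy of A. -/
abbrev V1 := Q T × A

/-- Orientation on `V1`: cross pairs (different first coordinate) oriented by `T` when
the second coordinates are adjacent, and by an arbitrary fixed order on parts otherwise. -/
def E1 (u v : V1 T) : Prop :=
  u.1 ≠ v.1 ∧ (T.E u.2 v.2 ∨
    (¬ T.E u.2 v.2 ∧ ¬ T.E v.2 u.2 ∧ natEmb (Q T) u.1 < natEmb (Q T) v.1))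

lemma E1_asymm (u v : V1 T) : E1 T u v → ¬ E1 T v u := by
  rintro ⟨h1, h2⟩ ⟨h3, h4⟩
  rcases h2 with hE | ⟨hn1, hn2, hlt⟩ <;> rcases h4 with hE' | ⟨hn1', hn2', hlt'⟩
  · exact T.asymm _ _ hE hE'
  · exact hn2' hE
  · exact hn2 hE'
  · exact lt_asymm hlt hlt'

lemma E1_total (u v : V1 T) (h : u.1 ≠ v.1) : E1 T u v ∨ E1 T v u := by
  by_cases hab : T.E u.2 v.2
  · exact Or.inl ⟨h, Or.inl hab⟩
  by_cases hba : T.E v.2 u.2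
  · exact Or.inr ⟨Ne.symm h, Or.inl hba⟩
  have hne : natEmb (Q T) u.1 ≠ natEmb (Q T) v.1 := fun hh => h ((natEmb (Q T)).injective hh)
  rcases lt_or_gt_of_ne hne with hlt | hgt
  · exact Or.inl ⟨h, Or.inr ⟨hab, hba, hlt⟩⟩
  · exact Or.inr ⟨Ne.symm h, Or.inr ⟨hba, hab, hgt⟩⟩

lemma E1_iff_not (u v : V1 T) (h : u.1 ≠ v.1) : E1 T u v ↔ ¬ E1 T v u := by
  constructor
  · exact E1_asymm T u v
  · intro hn
    rcases E1_total T u v h with h' | h'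
    · exact h'
    · exact absurd h' hn

def e0 (a : A) : V1 T := (Quotient.mk (nonadjSetoid T) a, a)

lemma e0_E (a b : A) : E1 T (e0 T a) (e0 T b) ↔ T.E a b := by
  constructor
  · rintro ⟨hne, h⟩
    rcases h with h | ⟨hn1, hn2, _⟩
    · exact h
    · exact absurd (Quotient.sound (⟨hn1, hn2⟩ : (nonadjSetoid T).r a b)) hne
  · intro h
    refine ⟨fun hq => ?_, Or.inl h⟩
    exact (Quotient.exact hq : (nonadjSetoid T).r a b).1 h

/-- Vertex set of `B`. -/
abbrev VB := V1 T × (V1 T → Bool)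

/-- The edge relation of `B`: the direction inherited from `E1` is flipped according to
the valuations. -/
def EB (u v : VB T) : Prop :=
  (E1 T u.1 v.1 ∧ u.2 v.1 = v.2 u.1) ∨ (E1 T v.1 u.1 ∧ ¬ u.2 v.1 = v.2 u.1)

lemma EB_asymm (u v : VB T) : EB T u v → ¬ EB T v u := by
  rintro (⟨h1, h2⟩ | ⟨h1, h2⟩) (⟨h3, h4⟩ | ⟨h3, h4⟩)
  · exact E1_asymm T _ _ h1 h3
  · exact h4 h2.symm
  · exact h2 h4.symm
  · exact E1_asymm T _ _ h1 h3

lemma nonadjB (u v : VB T) : (¬ EB T u v ∧ ¬ EB T v u) ↔ u.1.1 = v.1.1 := by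
  constructor
  · rintro ⟨h1, h2⟩
    by_contra hne
    rcases E1_total T u.1 v.1 hne with hE | hE
    · by_cases hs : u.2 v.1 = v.2 u.1
      · exact h1 (Or.inl ⟨hE, hs⟩)
      · exact h2 (Or.inr ⟨hE, fun hh => hs hh.symm⟩)
    · by_cases hs : v.2 u.1 = u.2 v.1
      · exact h2 (Or.inl ⟨hE, hs⟩)
      · exact h1 (Or.inr ⟨hE, fun hh => hs hh.symm⟩)
  · intro h
    constructor
    · rintro (⟨h1, _⟩ | ⟨h1, _⟩)
      · exact h1.1 h
      · exact h1.1 h.symm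
    · rintro (⟨h1, _⟩ | ⟨h1, _⟩)
      · exact h1.1 h.symm
      · exact h1.1 h

/-- The EPPA witness tournament. -/
def TB : PartiteTournament (VB T) where
  E := EB T
  asymm := EB_asymm T
  nonadj_equiv := by
    refine ⟨fun u => (nonadjB T u u).mpr rfl, fun h => (nonadjB T _ _).mpr
      ((nonadjB T _ _).mp h).symm, fun h h' => (nonadjB T _ _).mpr
      (((nonadjB T _ _).mp h).trans ((nonadjB T _ _).mp h'))⟩


variable (σ : Equiv.Perm (V1 T)) (S1 : Set (V1 T))

open scoped Classical

/-- Whether σ flips the `E1`-direction of the (ordered) pair (a,b). -/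
def flip (a b : V1 T) : Bool :=
  xor (decide (E1 T a b)) (decide (E1 T (σ a) (σ b)))

/-- The valuation-correction bits. -/
def dd (a b : V1 T) : Bool :=
  if a ∈ S1 then false
  else if b ∈ S1 then flip T σ a b
  else if natEmb (V1 T) a < natEmb (V1 T) b then flip T σ a b else false

lemma flip_symm (a b : V1 T) (hp : a.1 ≠ b.1)
    (hfst : ∀ x y : V1 T, (σ x).1 = (σ y).1 ↔ x.1 = y.1) :
    flip T σ b a = flip T σ a b := by
  have hps : (σ a).1 ≠ (σ b).1 := fun h => hp ((hfst a b).mp h)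
  by_cases k1 : E1 T a b
  · have k1' : ¬ E1 T b a := E1_asymm T _ _ k1
    by_cases k2 : E1 T (σ a) (σ b)
    · have k2' : ¬ E1 T (σ b) (σ a) := E1_asymm T _ _ k2
      simp [flip, k1, k2, k1', k2']
    · have k2' : E1 T (σ b) (σ a) := (E1_total T _ _ hps).resolve_left k2
      simp [flip, k1, k2, k1', k2']
  · have k1' : E1 T b a := (E1_total T _ _ hp).resolve_left k1
    by_cases k2 : E1 T (σ a) (σ b)
    · have k2' : ¬ E1 T (σ b) (σ a) := E1_asymm T _ _ k2
      simp [flip, k1, k2, k1', k2']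
    · have k2' : E1 T (σ b) (σ a) := (E1_total T _ _ hps).resolve_left k2
      simp [flip, k1, k2, k1', k2']

lemma dd_xor (a b : V1 T) (hp : a.1 ≠ b.1)
    (hfst : ∀ x y : V1 T, (σ x).1 = (σ y).1 ↔ x.1 = y.1)
    (hflipS : ∀ x ∈ S1, ∀ y ∈ S1, E1 T (σ x) (σ y) ↔ E1 T x y) :
    xor (dd T σ S1 a b) (dd T σ S1 b a) = flip T σ a b := by
  have hsymm := flip_symm T σ a b hp hfst
  by_cases ha : a ∈ S1 <;> by_cases hb : b ∈ S1
  · have hiff : E1 T (σ a) (σ b) ↔ E1 T a b := hflipS a ha b hb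
    by_cases k : E1 T a b
    · simp [dd, ha, hb, flip, k, hiff.mpr k]
    · have k' : ¬ E1 T (σ a) (σ b) := fun h => k (hiff.mp h)
      simp [dd, ha, hb, flip, k, k']
  · simp [dd, ha, hb, hsymm]
  · simp [dd, ha, hb]
  · have hne : a ≠ b := fun h => hp (congrArg Prod.fst h)
    have hι : natEmb (V1 T) a ≠ natEmb (V1 T) b :=
      fun h => hne ((natEmb (V1 T)).injective h)
    rcases lt_or_gt_of_ne hι with hlt | hgt
    · simp [dd, ha, hb, hlt, not_lt_of_gt hlt]
    · simp [dd, ha, hb, hgt, not_lt_of_gt hgt, hsymm]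

/-- The automorphism of `B` induced by σ and the correction bits. -/
def FF : VB T ≃ VB T where
  toFun u := (σ u.1, fun y => xor (u.2 (σ.symm y)) (dd T σ S1 u.1 (σ.symm y)))
  invFun u := (σ.symm u.1, fun y => xor (u.2 (σ y)) (dd T σ S1 (σ.symm u.1) y))
  left_inv u := by
    refine Prod.ext (by simp) (funext fun y => ?_)
    simp [Bool.xor_assoc]
  right_inv u := by
    refine Prod.ext (by simp) (funext fun y => ?_)
    simp [Bool.xor_assoc]

lemma FF_mem (a : V1 T) (ha : a ∈ S1) (χ : V1 T → Bool) :
    FF T σ S1 (a, χ) = (σ a, fun y => χ (σ.symm y)) := by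
  refine Prod.ext rfl (funext fun y => ?_)
  simp [FF, dd, ha]

lemma FF_aut (hfst : ∀ x y : V1 T, (σ x).1 = (σ y).1 ↔ x.1 = y.1)
    (hflipS : ∀ x ∈ S1, ∀ y ∈ S1, E1 T (σ x) (σ y) ↔ E1 T x y) :
    ∀ u v : VB T, EB T (FF T σ S1 u) (FF T σ S1 v) ↔ EB T u v := by
  intro u v
  obtain ⟨a, χ⟩ := u
  obtain ⟨b, ψ⟩ := v
  have key : EB T (FF T σ S1 (a, χ)) (FF T σ S1 (b, ψ)) ↔
      ((E1 T (σ a) (σ b) ∧ xor (χ b) (dd T σ S1 a b) = xor (ψ a) (dd T σ S1 b a)) ∨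
       (E1 T (σ b) (σ a) ∧ ¬ xor (χ b) (dd T σ S1 a b) = xor (ψ a) (dd T σ S1 b a))) := by
    simp [EB, FF]
  rw [key]
  by_cases hp : a.1 = b.1
  · have h1 : ¬ E1 T a b := fun h => h.1 hp
    have h2 : ¬ E1 T b a := fun h => h.1 hp.symm
    have h3 : ¬ E1 T (σ a) (σ b) := fun h => h.1 ((hfst a b).mpr hp)
    have h4 : ¬ E1 T (σ b) (σ a) := fun h => h.1 ((hfst b a).mpr hp.symm)
    simp [EB, h1, h2, h3, h4]
  · have hps : ¬ (σ a).1 = (σ b).1 := fun h => hp ((hfst a b).mp h)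
    have hdd := dd_xor T σ S1 a b hp hfst hflipS
    by_cases h1 : E1 T a b
    · have hba : ¬ E1 T b a := E1_asymm T _ _ h1
      by_cases h2 : E1 T (σ a) (σ b)
      · have hflip : flip T σ a b = false := by simp [flip, h1, h2]
        have hs := xor_eq_of_false (χ b) (ψ a) _ _ (hdd.trans hflip)
        have h2' := E1_asymm T _ _ h2
        simp [EB, h1, h2, hba, h2', hs]
      · have h2' : E1 T (σ b) (σ a) := (E1_total T _ _ hps).resolve_left h2
        have hflip : flip T σ a b = true := by simp [flip, h1, h2]
        have hs := xor_eq_of_true (χ b) (ψ a) _ _ (hdd.trans hflip)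
        simp [EB, h1, h2, hba, h2', hs]
    · have h1' : E1 T b a := (E1_total T _ _ hp).resolve_left h1
      by_cases h2 : E1 T (σ a) (σ b)
      · have h2' := E1_asymm T _ _ h2
        have hflip : flip T σ a b = true := by simp [flip, h1, h2]
        have hs := xor_eq_of_true (χ b) (ψ a) _ _ (hdd.trans hflip)
        simp [EB, h1, h1', h2, h2', hs]
      · have h2' : E1 T (σ b) (σ a) := (E1_total T _ _ hps).resolve_left h2
        have hflip : flip T σ a b = false := by simp [flip, h1, h2]
        have hs := xor_eq_of_false (χ b) (ψ a) _ _ (hdd.trans hflip)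
        simp [EB, h1, h1', h2, h2', hs]

end
end EPPA18

/-- EPPA for `n`-partite tournaments, `n ∈ {2,3,…} ∪ {ω}` (here `n : ℕ∞`, with `n = ⊤`
for the ω case): every finite tournament with at most `n` parts embeds into a finite
tournament with at most `n` parts in which every partial automorphism (isomorphism
between induced substructures) extends to an automorphism. -/
theorem stmt18 (n : ℕ∞) (hn : 2 ≤ n) (A : Type) [Finite A]
    (T : PartiteTournament A)
    (hT : (Nat.card (Quotient (nonadjSetoid T)) : ℕ∞) ≤ n) :
    ∃ (B : Type) (_ : Finite B) (T' : PartiteTournament B) (e : A → B),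
      (Nat.card (Quotient (nonadjSetoid T')) : ℕ∞) ≤ n ∧
      Function.Injective e ∧
      (∀ u v, T'.E (e u) (e v) ↔ T.E u v) ∧
      ∀ (S : Set A) (φ : S → A), Function.Injective φ →
        (∀ u v : S, T.E (φ u) (φ v) ↔ T.E u.1 v.1) →
        ∃ F : B ≃ B, (∀ u v, T'.E (F u) (F v) ↔ T'.E u v) ∧
          ∀ x : S, F (e x.1) = e (φ x) := by
  classical
  refine ⟨EPPA18.VB T, inferInstance, EPPA18.TB T,
    fun a => (EPPA18.e0 T a, fun _ => false), ?_, ?_, ?_, ?_⟩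
  · have eqv : Quotient (nonadjSetoid (EPPA18.TB T)) ≃ EPPA18.Q T := by
      refine Equiv.ofBijective (Quotient.lift (fun u : EPPA18.VB T => u.1.1) ?_) ⟨?_, ?_⟩
      · intro u v h
        exact (EPPA18.nonadjB T u v).mp h
      · refine fun x y => Quotient.inductionOn₂ x y (fun u v h => ?_)
        exact Quotient.sound ((EPPA18.nonadjB T u v).mpr h)
      · intro p
        obtain ⟨a, ha⟩ := Quotient.exists_rep p
        exact ⟨Quotient.mk _ ((p, a), fun _ => false), rfl⟩
    rw [Nat.card_congr eqv]
    exact hT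
  · intro a b h
    exact congrArg (fun x => x.1.2) h
  · intro u v
    show EPPA18.EB T _ _ ↔ _
    simp [EPPA18.EB, EPPA18.e0_E]
  · intro S φ hinj hpres
    have hpres' : ∀ u v : S,
        ((¬ T.E (φ u) (φ v) ∧ ¬ T.E (φ v) (φ u)) ↔ (¬ T.E u.1 v.1 ∧ ¬ T.E v.1 u.1)) := by
      intro u v
      rw [hpres u v, hpres v u]
    obtain ⟨τ, hτ⟩ : ∃ τ : Equiv.Perm (EPPA18.Q T), ∀ x : S,
        τ (Quotient.mk (nonadjSetoid T) x.1) = Quotient.mk (nonadjSetoid T) (φ x) := by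
      have key : ∀ (x y : S),
          Quotient.mk (nonadjSetoid T) x.1 = Quotient.mk (nonadjSetoid T) y.1 →
          Quotient.mk (nonadjSetoid T) (φ x) = Quotient.mk (nonadjSetoid T) (φ y) := by
        intro x y h
        exact Quotient.sound ((hpres' x y).mpr (Quotient.exact h))
      have keyrev : ∀ (x y : S),
          Quotient.mk (nonadjSetoid T) (φ x) = Quotient.mk (nonadjSetoid T) (φ y) →
          Quotient.mk (nonadjSetoid T) x.1 = Quotient.mk (nonadjSetoid T) y.1 := by
        intro x y h
        exact Quotient.sound ((hpres' x y).mp (Quotient.exact h))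
      have hfPinj : Function.Injective
          (fun p : {p : EPPA18.Q T | ∃ x : S, Quotient.mk (nonadjSetoid T) x.1 = p} =>
            Quotient.mk (nonadjSetoid T) (φ p.2.choose)) := by
        intro p q h
        have hp := p.2.choose_spec
        have hq := q.2.choose_spec
        apply Subtype.ext
        rw [← hp, ← hq]
        exact keyrev _ _ h
      obtain ⟨τ, hτ0⟩ := EPPA18.exists_perm_extend
        (s := {p : EPPA18.Q T | ∃ x : S, Quotient.mk (nonadjSetoid T) x.1 = p})
        (f := fun p => Quotient.mk (nonadjSetoid T) (φ p.2.choose)) hfPinj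
      refine ⟨τ, fun x => ?_⟩
      have hmem : Quotient.mk (nonadjSetoid T) x.1 ∈
          {p : EPPA18.Q T | ∃ x : S, Quotient.mk (nonadjSetoid T) x.1 = p} := ⟨x, rfl⟩
      exact (hτ0 ⟨_, hmem⟩).trans (key _ x hmem.choose_spec)
    obtain ⟨ρ, hρ⟩ := EPPA18.exists_perm_extend (s := S) (f := φ) hinj
    set σ : Equiv.Perm (EPPA18.V1 T) := Equiv.prodCongr τ ρ with hσ
    have hfst : ∀ x y : EPPA18.V1 T, (σ x).1 = (σ y).1 ↔ x.1 = y.1 := by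
      intro x y
      constructor
      · intro h
        exact τ.injective h
      · intro h
        show τ x.1 = τ y.1
        rw [h]
    have σ_e0 : ∀ x : S, σ (EPPA18.e0 T x.1) = EPPA18.e0 T (φ x) := by
      intro x
      show (τ (Quotient.mk (nonadjSetoid T) x.1), ρ x.1) = _
      rw [hτ x, hρ x]
      rfl
    set S1 : Set (EPPA18.V1 T) := (fun a : A => EPPA18.e0 T a) '' S with hS1
    have hflipS : ∀ u ∈ S1, ∀ v ∈ S1, EPPA18.E1 T (σ u) (σ v) ↔ EPPA18.E1 T u v := by
      rintro _ ⟨x, hx, rfl⟩ _ ⟨y, hy, rfl⟩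
      rw [σ_e0 ⟨x, hx⟩, σ_e0 ⟨y, hy⟩, EPPA18.e0_E, EPPA18.e0_E]
      exact hpres ⟨x, hx⟩ ⟨y, hy⟩
    refine ⟨EPPA18.FF T σ S1, ?_, ?_⟩
    · intro u v
      exact EPPA18.FF_aut T σ S1 hfst hflipS u v
    · intro x
      have hx : EPPA18.e0 T x.1 ∈ S1 := ⟨x.1, x.2, rfl⟩
      have hmem := EPPA18.FF_mem T σ S1 (EPPA18.e0 T x.1) hx (fun _ => false)
      show EPPA18.FF T σ S1 (EPPA18.e0 T x.1, fun _ => false) = _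
      rw [hmem, σ_e0 x]
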